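/- (Lemma 4.2, upper bound.) Let n ≥ 1, 1 ≤ p < ∞, 0 ≤ λ ≤ 1, let w : ℝⁿ → [0,∞) be a measurable weight, x₀ ∈ ℝⁿ and r₀ > 0. Then ‖χ_{B(x₀,r₀)}‖_{p,λ;w} ≤ sup over all x with |x − x₀| < 2r₀ and all 0 < r ≤ r₀ of ( w(B(x,r)) / |B(x,r)|^{λ} )^{1/p}. -/

import Mathlib

open MeasureTheory

/-- The weighted Morrey norm on `ℝⁿ`: supremum over all balls `B(x,r)` of
`( |B(x,r)|^{-λ} ∫_{B(x,r)} |f|^p w )^{1/p}`, with values in `[0,∞]`. -/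
noncomputable def morreyNorm {n : ℕ} (p lam : ℝ)
    (w f : EuclideanSpace ℝ (Fin n) → ℝ) : ENNReal :=
  ⨆ (x : EuclideanSpace ℝ (Fin n)) (r : ℝ) (_ : 0 < r),
    ((volume (Metric.ball x r)) ^ (-lam) *
      ∫⁻ y in Metric.ball x r, ENNReal.ofReal (|f y| ^ p * w y)) ^ (1 / p)

/-- Lemma 4.2 (upper bound):
`‖χ_{B(x₀,r₀)}‖_{p,λ;w} ≤ sup_{|x-x₀|<2r₀, 0<r≤r₀} ( w(B(x,r)) / |B(x,r)|^λ )^{1/p}`. -/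
theorem stmt6 (n : ℕ) (hn : 1 ≤ n) (p lam : ℝ) (hp : 1 ≤ p)
    (hlam0 : 0 ≤ lam) (hlam1 : lam ≤ 1)
    (w : EuclideanSpace ℝ (Fin n) → ℝ) (hw : Measurable w) (hw0 : ∀ x, 0 ≤ w x)
    (x₀ : EuclideanSpace ℝ (Fin n)) (r₀ : ℝ) (hr₀ : 0 < r₀) :
    morreyNorm p lam w ((Metric.ball x₀ r₀).indicator 1) ≤
      ⨆ (x : EuclideanSpace ℝ (Fin n)) (_ : dist x x₀ < 2 * r₀)
          (r : ℝ) (_ : 0 < r) (_ : r ≤ r₀),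
        ((∫⁻ y in Metric.ball x r, ENNReal.ofReal (w y)) *
          (volume (Metric.ball x r)) ^ (-lam)) ^ (1 / p) := by
  have hp0 : (0:ℝ) < p := lt_of_lt_of_le one_pos hp
  rw [morreyNorm]
  refine iSup_le fun x => iSup_le fun r => iSup_le fun hr => ?_
  have hind : ∀ y, ENNReal.ofReal (|((Metric.ball x₀ r₀).indicator 1) y| ^ p * w y)
      = (Metric.ball x₀ r₀).indicator (fun y => ENNReal.ofReal (w y)) y := by
    intro y
    by_cases hy : y ∈ Metric.ball x₀ r₀
    · simp [Set.indicator_of_mem hy, Real.one_rpow]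
    · simp [Set.indicator_of_notMem hy, Real.zero_rpow (ne_of_gt hp0)]
  have hInt : (∫⁻ y in Metric.ball x r,
        ENNReal.ofReal (|((Metric.ball x₀ r₀).indicator 1) y| ^ p * w y))
      = ∫⁻ y in Metric.ball x₀ r₀ ∩ Metric.ball x r, ENNReal.ofReal (w y) := by
    simp_rw [hind]
    rw [lintegral_indicator measurableSet_ball,
      Measure.restrict_restrict measurableSet_ball]
  rw [hInt]
  by_cases hrr : r ≤ r₀
  · by_cases hd : dist x x₀ < 2 * r₀
    · refine le_trans ?_ (le_iSup_of_le x (le_iSup_of_le hd (le_iSup_of_le r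
        (le_iSup_of_le hr (le_iSup_of_le hrr le_rfl)))))
      rw [mul_comm]
      exact ENNReal.rpow_le_rpow
        (mul_le_mul_left (lintegral_mono_set Set.inter_subset_right) _)
        (by positivity)
    · have hdisj : Metric.ball x₀ r₀ ∩ Metric.ball x r = ∅ := by
        ext y
        simp only [Set.mem_inter_iff, Metric.mem_ball, Set.mem_empty_iff_false, iff_false,
          not_and]
        intro h1 h2
        apply hd
        calc dist x x₀ ≤ dist x y + dist y x₀ := dist_triangle _ _ _
          _ < r + r₀ := by rw [dist_comm x y]; exact add_lt_add h2 h1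
          _ ≤ 2 * r₀ := by linarith
      rw [hdisj]
      simp only [Measure.restrict_empty, lintegral_zero_measure, mul_zero]
      rw [ENNReal.zero_rpow_of_pos (by positivity)]
      exact zero_le
  · push_neg at hrr
    have hvol : volume (Metric.ball x₀ r₀) ≤ volume (Metric.ball x r) := by
      rw [Measure.addHaar_ball_center volume x₀, Measure.addHaar_ball_center volume x]
      exact measure_mono (Metric.ball_subset_ball hrr.le)
    have hpow : (volume (Metric.ball x r)) ^ (-lam)
        ≤ (volume (Metric.ball x₀ r₀)) ^ (-lam) := by
      rw [ENNReal.rpow_neg, ENNReal.rpow_neg]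
      exact ENNReal.inv_le_inv.2 (ENNReal.rpow_le_rpow hvol hlam0)
    refine le_trans ?_ (le_iSup_of_le x₀
      (le_iSup_of_le (by rw [dist_self]; positivity) (le_iSup_of_le r₀
        (le_iSup_of_le hr₀ (le_iSup_of_le le_rfl le_rfl)))))
    rw [mul_comm]
    exact ENNReal.rpow_le_rpow
      (mul_le_mul' (lintegral_mono_set Set.inter_subset_left) hpow)
      (by positivity)
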